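/- Let Ω be a finite set and h : ΔΩ → ℝ a bounded function on the probability simplex. Then the closed convex hull of h — the pointwise supremum of all affine functions on ℝ^Ω whose restriction to ΔΩ is everywhere ≤ h, equivalently the largest lower semicontinuous convex function on ΔΩ below h — is a continuous function on ΔΩ. -/

import Mathlib

/-- The closed convex hull of a bounded function `h` on the probability simplex over a
finite set `Ω` — the pointwise supremum of all affine functions on `ℝ^Ω` lying below `h` on
the simplex — is a continuous function on the simplex. -/
theorem closedConvexHull_continuousOn
    {Ω : Type*} [Fintype Ω] (h : (Ω → ℝ) → ℝ)
    (M : ℝ) (hbdd : ∀ x ∈ stdSimplex ℝ Ω, |h x| ≤ M) :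
    ContinuousOn
      (fun x : Ω → ℝ => sSup { r : ℝ | ∃ ℓ : (Ω → ℝ) →ᵃ[ℝ] ℝ,
        (∀ y ∈ stdSimplex ℝ Ω, ℓ y ≤ h y) ∧ ℓ x = r })
      (stdSimplex ℝ Ω) := by
  set S : (Ω → ℝ) → Set ℝ := fun x => { r : ℝ | ∃ ℓ : (Ω → ℝ) →ᵃ[ℝ] ℝ,
      (∀ y ∈ stdSimplex ℝ Ω, ℓ y ≤ h y) ∧ ℓ x = r } with hS
  set g : (Ω → ℝ) → ℝ := fun x => sSup (S x) with hg
  show ContinuousOn g (stdSimplex ℝ Ω)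
  -- the constant map `-M` is a witness that each `S x` is nonempty
  have hℓ₀ : ∀ y ∈ stdSimplex ℝ Ω,
      (AffineMap.const ℝ (Ω → ℝ) (-M)) y ≤ h y := by
    intro y hy
    have := hbdd y hy
    have := neg_abs_le (h y)
    simp only [AffineMap.const_apply]
    linarith
  have hne : ∀ w, (S w).Nonempty := fun w =>
    ⟨(AffineMap.const ℝ (Ω → ℝ) (-M)) w, AffineMap.const ℝ (Ω → ℝ) (-M), hℓ₀, rfl⟩
  have hub : ∀ w ∈ stdSimplex ℝ Ω, ∀ r ∈ S w, r ≤ M := by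
    rintro w hw r ⟨ℓ, hℓ, rfl⟩
    exact (hℓ w hw).trans ((le_abs_self _).trans (hbdd w hw))
  have hbA : ∀ w ∈ stdSimplex ℝ Ω, BddAbove (S w) := fun w hw => ⟨M, hub w hw⟩
  have hgle : ∀ w ∈ stdSimplex ℝ Ω, g w ≤ M := fun w hw => csSup_le (hne w) (hub w hw)
  have hgge : ∀ w ∈ stdSimplex ℝ Ω, -M ≤ g w := fun w hw =>
    le_csSup (hbA w hw) ⟨AffineMap.const ℝ (Ω → ℝ) (-M), hℓ₀, rfl⟩
  intro x hx
  rw [Metric.continuousWithinAt_iff]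
  intro ε hε
  have hMnn : 0 ≤ M := (abs_nonneg _).trans (hbdd x hx)
  -- lower semicontinuity part: pick a near-optimal affine map
  obtain ⟨r, ⟨ℓ, hℓle, hℓx⟩, hr⟩ : ∃ r ∈ S x, g x - ε / 2 < r :=
    exists_lt_of_lt_csSup (hne x) (by linarith)
  have hℓc : ContinuousAt ℓ x := ℓ.continuous_of_finiteDimensional.continuousAt
  rw [Metric.continuousAt_iff] at hℓc
  obtain ⟨δ₁, hδ₁, hℓδ⟩ := hℓc (ε / 2) (by linarith)
  -- upper semicontinuity part: convexity + boundedness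
  set t : ℝ := min (1 / 2) (ε / (4 * M + 4)) with ht
  have ht0 : 0 < t := lt_min (by norm_num) (by positivity)
  have ht1 : t < 1 := lt_of_le_of_lt (min_le_left _ _) (by norm_num)
  have htε : t * (2 * M) < ε := by
    have h1 : t ≤ ε / (4 * M + 4) := min_le_right _ _
    have h2 : 0 < 4 * M + 4 := by linarith
    have h3 : t * (4 * M + 4) ≤ ε := by
      rw [← le_div_iff₀ h2]; exact h1
    nlinarith [mul_pos ht0 (show (0:ℝ) < 2 * M + 4 by linarith)]
  -- minimal positive coordinate of x
  have hxs : ∑ ω, x ω = 1 := hx.2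
  have hΩne : ∃ ω : Ω, 0 < x ω := by
    by_contra hcon
    push_neg at hcon
    have : ∑ ω, x ω ≤ 0 := Finset.sum_nonpos fun ω _ => hcon ω
    linarith
  set s : Finset Ω := Finset.univ.filter (fun ω => 0 < x ω) with hsdef
  have hsne : s.Nonempty := by
    obtain ⟨ω, hω⟩ := hΩne
    exact ⟨ω, by simp [hsdef, hω]⟩
  set m : ℝ := s.inf' hsne x with hm
  have hm0 : 0 < m := by
    rw [hm]
    apply Finset.lt_inf'_iff hsne (f := x) (a := (0:ℝ)) |>.2
    intro ω hω
    exact (Finset.mem_filter.1 hω).2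
  refine ⟨min δ₁ (t * m), lt_min hδ₁ (by positivity), ?_⟩
  intro y hy hyd
  have hyd1 : dist y x < δ₁ := lt_of_lt_of_le hyd (min_le_left _ _)
  have hyd2 : dist y x < t * m := lt_of_lt_of_le hyd (min_le_right _ _)
  rw [Real.dist_eq, abs_sub_lt_iff]
  constructor
  · -- g y < g x + ε : upper semicontinuity
    -- build z with y = (1-t) x + t z
    set z : Ω → ℝ := fun ω => (y ω - (1 - t) * x ω) / t with hz
    have hzsimp : z ∈ stdSimplex ℝ Ω := by
      constructor
      · intro ω
        rw [hz]
        apply div_nonneg _ ht0.le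
        rcases eq_or_lt_of_le (hx.1 ω) with hxo | hxo
        · have := hy.1 ω
          nlinarith
        · have hcoord : |y ω - x ω| ≤ dist y x := by
            have := dist_le_pi_dist y x ω
            rwa [Real.dist_eq] at this
          have hmem : ω ∈ s := by simp [hsdef, hxo]
          have hmle : m ≤ x ω := Finset.inf'_le _ hmem
          have h1 : x ω - y ω ≤ |y ω - x ω| := by
            rw [abs_sub_comm]; exact le_abs_self _
          nlinarith
      · rw [hz]
        rw [← Finset.sum_div]
        have : ∑ ω, (y ω - (1 - t) * x ω) = t := by
          rw [Finset.sum_sub_distrib, ← Finset.mul_sum, hxs, hy.2]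
          ring
        rw [this, div_self ht0.ne']
    have hyz : y = AffineMap.lineMap x z t := by
      funext ω
      simp only [AffineMap.lineMap_apply_module]
      simp only [Pi.add_apply, Pi.smul_apply, smul_eq_mul, hz]
      field_simp
      ring
    have key : g y ≤ (1 - t) * g x + t * g z := by
      apply csSup_le (hne y)
      rintro r ⟨ℓ', hℓ', rfl⟩
      have hx' : ℓ' x ≤ g x := le_csSup (hbA x hx) ⟨ℓ', hℓ', rfl⟩
      have hz' : ℓ' z ≤ g z := le_csSup (hbA z hzsimp) ⟨ℓ', hℓ', rfl⟩
      have : ℓ' y = (1 - t) * ℓ' x + t * ℓ' z := by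
        rw [hyz, AffineMap.apply_lineMap, AffineMap.lineMap_apply_module]
        simp [smul_eq_mul]
      rw [this]
      have h1t : 0 ≤ 1 - t := by linarith
      nlinarith
    have hgzM : g z ≤ M := hgle z hzsimp
    have hgxM : -M ≤ g x := hgge x hx
    have h1t : 0 ≤ 1 - t := by linarith
    nlinarith
  · -- g x - ε < g y : lower semicontinuity
    have hℓy : ℓ y ≤ g y := le_csSup (hbA y hy) ⟨ℓ, hℓle, rfl⟩
    have := hℓδ hyd1
    rw [Real.dist_eq, abs_sub_lt_iff] at this
    have : ℓ x - ε / 2 < ℓ y := by linarith [this.2]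
    have : g x - ε < ℓ y := by rw [hℓx] at *; linarith
    linarith
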